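/- arXiv:2205.07428 — 2 statements merged into one kernel-verified Lean document; each statement's English description precedes it below -/
import Mathlib

section
/- For all real numbers x, y with 0 ≤ x ≤ 1/2 and 0 ≤ y ≤ 1/2 and x ≠ y, |x·log x − y·log y| ≤ |x − y| · log(1/|x − y|), where 0·log 0 is interpreted as 0. -/
lemma xlogx_aux (x y : ℝ) (hx0 : 0 ≤ x) (hy1 : y ≤ 1/2) (hlt : x < y) :
    |x * Real.log x - y * Real.log y| ≤ |x - y| * Real.log (1 / |x - y|) := by
  have hy0 : 0 < y := lt_of_le_of_lt hx0 hlt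
  have ht : 0 < y - x := sub_pos.mpr hlt
  have habs : |x - y| = y - x := by
    rw [abs_of_neg (by linarith)]; ring
  rw [habs, one_div, Real.log_inv]
  set t := y - x with ht_def
  have ht2 : t ≤ 1/2 := by simp only [ht_def]; linarith
  have hty : t ≤ y := by simp only [ht_def]; linarith
  have hlogty : Real.log t ≤ Real.log y := Real.log_le_log ht hty
  have h1 : 0 ≤ x * (Real.log y - Real.log x) := by
    rcases eq_or_lt_of_le hx0 with h | h
    · simp [← h]
    · have := Real.log_le_log h hlt.le
      nlinarith
  have h2 : x * (Real.log y - Real.log x) ≤ t := by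
    rcases eq_or_lt_of_le hx0 with h | h
    · simp [← h]; linarith
    · have hd : Real.log y - Real.log x = Real.log (y / x) :=
        (Real.log_div hy0.ne' h.ne').symm
      have hle := Real.log_le_sub_one_of_pos (show 0 < y / x by positivity)
      rw [hd]
      calc x * Real.log (y / x) ≤ x * (y / x - 1) := by nlinarith
        _ = t := by field_simp; exact ht_def.symm
  have hlogy2 : Real.log y ≤ -Real.log 2 := by
    have h := Real.log_le_log hy0 hy1
    rwa [one_div, Real.log_inv] at h
  have hl2 : (0.6931471803 : ℝ) < Real.log 2 := Real.log_two_gt_d9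
  rw [abs_le]
  constructor
  · -- y log y - x log x ≥ t log t
    have h3 : t * Real.log t ≤ t * Real.log y := by nlinarith
    nlinarith
  · -- y log y - x log x ≤ t - t log 2 ≤ -t log t
    have h4 : -Real.log t ≥ Real.log 2 := by
      have := Real.log_le_log ht ht2
      rw [one_div, Real.log_inv] at this
      linarith
    nlinarith

theorem xlogx_continuity_bound (x y : ℝ)
    (hx0 : 0 ≤ x) (hx1 : x ≤ 1/2) (hy0 : 0 ≤ y) (hy1 : y ≤ 1/2) (hxy : x ≠ y) :
    |x * Real.log x - y * Real.log y| ≤ |x - y| * Real.log (1 / |x - y|) := by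
  rcases lt_or_gt_of_ne hxy with h | h
  · exact xlogx_aux x y hx0 hy1 h
  · have := xlogx_aux y x hy0 hx1 h
    rwa [abs_sub_comm (y * Real.log y), abs_sub_comm y x] at this
end

section
/- Let F, G be probability measures on ℝ^k absolutely continuous with respect to Lebesgue measure λ, where F has compact support Θ_F of positive finite Lebesgue measure. Suppose the densities f and g both take values in [0, 1/2]. Then |H(F) − H(G)| ≤ δ·log(λ(Θ_F)/δ) + |∫_{Θ_F^c} g·log g dλ|, where δ := ∫_{Θ_F} |f − g| dλ (when δ > 0; if δ = 0 the first term is 0). -/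
open MeasureTheory

private lemma phi_superadd {y d : ℝ} (hy : 0 ≤ y) (hd : 0 ≤ d) :
    y * Real.log y + d * Real.log d ≤ (y + d) * Real.log (y + d) := by
  have h1 : y * Real.log y ≤ y * Real.log (y + d) := by
    rcases eq_or_lt_of_le hy with h | h
    · simp [← h]
    · exact mul_le_mul_of_nonneg_left (Real.log_le_log h (by linarith)) hy
  have h2 : d * Real.log d ≤ d * Real.log (y + d) := by
    rcases eq_or_lt_of_le hd with h | h
    · simp [← h]
    · exact mul_le_mul_of_nonneg_left (Real.log_le_log h (by linarith)) hd
  nlinarith [h1, h2]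

private lemma phi_upper {y d : ℝ} (hy : 0 ≤ y) (hd : 0 ≤ d) (hyd : y + d ≤ 1/2) :
    (y + d) * Real.log (y + d) - y * Real.log y ≤ -(d * Real.log d) := by
  rcases eq_or_lt_of_le hd with h | hdpos
  · simp [← h]
  have hlog2 : Real.log d ≤ Real.log (1/2) := Real.log_le_log hdpos (by linarith)
  have hd1 : Real.log d ≤ Real.log 2 - 1 := by
    have h2 : Real.log (1/2) = -Real.log 2 := by
      rw [one_div, Real.log_inv]
    have hl2 : (0.6931471803 : ℝ) < Real.log 2 := Real.log_two_gt_d9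
    linarith
  -- main estimate
  have key : (y + d) * Real.log (y + d) - y * Real.log y ≤ d + d * Real.log (y + d) := by
    rcases eq_or_lt_of_le hy with h | hypos
    · simp [← h]; linarith
    · have hq : Real.log ((y + d) / y) ≤ (y + d) / y - 1 :=
        Real.log_le_sub_one_of_pos (by positivity)
      have hsplit : Real.log ((y + d) / y) = Real.log (y + d) - Real.log y :=
        Real.log_div (by linarith) (ne_of_gt hypos)
      rw [hsplit] at hq
      have hyne : y ≠ 0 := ne_of_gt hypos
      have : y * (Real.log (y + d) - Real.log y) ≤ y * ((y + d) / y - 1) :=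
        mul_le_mul_of_nonneg_left hq hy
      have heq : y * ((y + d) / y - 1) = d := by field_simp; ring
      nlinarith [this]
  have hlyd : Real.log (y + d) ≤ Real.log (1/2) := Real.log_le_log (by linarith) hyd
  have h2 : Real.log (1/2) = -Real.log 2 := by rw [one_div, Real.log_inv]
  nlinarith [mul_le_mul_of_nonneg_left hlyd (le_of_lt hdpos),
    mul_le_mul_of_nonneg_left hd1 (le_of_lt hdpos)]

private lemma key_ineq {x y : ℝ} (hx0 : 0 ≤ x) (hy0 : 0 ≤ y) (hx : x ≤ 1/2) (hy : y ≤ 1/2) :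
    |x * Real.log x - y * Real.log y| ≤ -(|x - y| * Real.log |x - y|) := by
  wlog hxy : y ≤ x with H
  · have := H hy0 hx0 hy hx (by linarith)
    rwa [abs_sub_comm, abs_sub_comm y x] at this
  have hd0 : 0 ≤ x - y := by linarith
  rw [abs_of_nonneg hd0]
  rw [abs_le]
  constructor
  · have := phi_superadd hy0 hd0
    have hyd : y + (x - y) = x := by ring
    rw [hyd] at this
    linarith
  · have := phi_upper hy0 hd0 (by linarith)
    have hyd : y + (x - y) = x := by ring
    rw [hyd] at this
    linarith

private lemma eta_le_tangent {u c : ℝ} (hu : 0 ≤ u) (hc : 0 < c) :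
    -(u * Real.log u) ≤ 1/c + u * (Real.log c - 1) := by
  rcases eq_or_lt_of_le hu with h | hupos
  · simp [← h]; positivity
  · have h1 : Real.log (1/(u*c)) ≤ 1/(u*c) - 1 :=
      Real.log_le_sub_one_of_pos (by positivity)
    have h2 : Real.log (1/(u*c)) = -(Real.log u + Real.log c) := by
      rw [one_div, Real.log_inv, Real.log_mul (ne_of_gt hupos) (ne_of_gt hc)]
    rw [h2] at h1
    have h3 : u * (-(Real.log u + Real.log c)) ≤ u * (1/(u*c) - 1) :=
      mul_le_mul_of_nonneg_left h1 hu
    have h4 : u * (1/(u*c) - 1) = 1/c - u := by field_simp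
    nlinarith [h3]

private lemma abs_mul_log_le_one {t : ℝ} (h0 : 0 ≤ t) (h1 : t ≤ 1) :
    |t * Real.log t| ≤ 1 := by
  rcases eq_or_lt_of_le h0 with h | h
  · simp [← h]
  · have := Real.abs_log_mul_self_lt t h h1
    rw [mul_comm] at this
    linarith [this]

/-- Bound on the difference of differential entropies in terms of the `L¹` distance
of the densities on the (compact) support of `F` and a residual term. -/
theorem entropy_diff_bound (k : ℕ)
    (F G : Measure (Fin k → ℝ)) [IsProbabilityMeasure F] [IsProbabilityMeasure G]
    (f g : (Fin k → ℝ) → ℝ) (hf : Measurable f) (hg : Measurable g)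
    (hf0 : ∀ θ, 0 ≤ f θ) (hg0 : ∀ θ, 0 ≤ g θ)
    (hF : F = volume.withDensity (fun θ => ENNReal.ofReal (f θ)))
    (hG : G = volume.withDensity (fun θ => ENNReal.ofReal (g θ)))
    (ΘF : Set (Fin k → ℝ)) (hΘF : IsCompact ΘF) (hΘFm : MeasurableSet ΘF)
    (hΘFpos : 0 < volume ΘF) (hΘFfin : volume ΘF < ⊤)
    (hsupp : ∀ θ, θ ∉ ΘF → f θ = 0)
    (hfle : ∀ θ, f θ ≤ 1/2) (hgle : ∀ θ, g θ ≤ 1/2)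
    (hfint : Integrable (fun θ => f θ * Real.log (f θ)))
    (hgint : Integrable (fun θ => g θ * Real.log (g θ)))
    (δ : ℝ) (hδ : δ = ∫ θ in ΘF, |f θ - g θ|) :
    |(-∫ θ, f θ * Real.log (f θ)) - (-∫ θ, g θ * Real.log (g θ))| ≤
      δ * Real.log ((volume ΘF).toReal / δ) +
        |∫ θ in ΘFᶜ, g θ * Real.log (g θ)| := by
  classical
  set φ : (Fin k → ℝ) → ℝ := fun θ => f θ * Real.log (f θ) with hφdef
  set γ : (Fin k → ℝ) → ℝ := fun θ => g θ * Real.log (g θ) with hγdef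
  set u : (Fin k → ℝ) → ℝ := fun θ => |f θ - g θ| with hudef
  set η : (Fin k → ℝ) → ℝ := fun θ => -(u θ * Real.log (u θ)) with hηdef
  have hu0 : ∀ θ, 0 ≤ u θ := fun θ => abs_nonneg _
  have hu1 : ∀ θ, u θ ≤ 1 := by
    intro θ
    have h1 := hf0 θ; have h2 := hg0 θ; have h3 := hfle θ; have h4 := hgle θ
    rw [hudef]; rw [abs_le]; constructor <;> linarith
  have humeas : Measurable u := (hf.sub hg).abs
  have hηmeas : Measurable η :=
    (humeas.mul (Real.measurable_log.comp humeas)).neg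
  -- integrability facts on ΘF
  have hconst : ∀ C : ℝ, IntegrableOn (fun _ => C) ΘF volume := fun C =>
    integrableOn_const hΘFfin.ne
  have hu_int : IntegrableOn u ΘF volume := by
    refine (hconst 1).mono' humeas.aestronglyMeasurable ?_
    filter_upwards with θ
    rw [Real.norm_eq_abs, abs_of_nonneg (hu0 θ)]; exact hu1 θ
  have hη_int : IntegrableOn η ΘF volume := by
    refine (hconst 1).mono' hηmeas.aestronglyMeasurable ?_
    filter_upwards with θ
    rw [hηdef, Real.norm_eq_abs, abs_neg]
    exact abs_mul_log_le_one (hu0 θ) (hu1 θ)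
  -- δ is nonneg
  have hδ0 : 0 ≤ δ := by
    rw [hδ]; exact integral_nonneg fun θ => abs_nonneg _
  -- splitting the integrals
  have hφc : ∫ θ in ΘFᶜ, φ θ = 0 := by
    rw [setIntegral_congr_fun hΘFm.compl
      (fun θ hθ => by simp [hφdef, hsupp θ hθ] : Set.EqOn φ (fun _ => (0:ℝ)) ΘFᶜ)]
    simp
  have hsplitf : ∫ θ, φ θ = ∫ θ in ΘF, φ θ := by
    rw [← integral_add_compl hΘFm hfint, hφc, add_zero]
  have hsplitg : ∫ θ, γ θ = (∫ θ in ΘF, γ θ) + ∫ θ in ΘFᶜ, γ θ :=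
    (integral_add_compl hΘFm hgint).symm
  have hrw : (-∫ θ, φ θ) - (-∫ θ, γ θ)
      = ((∫ θ in ΘF, γ θ) - ∫ θ in ΘF, φ θ) + ∫ θ in ΘFᶜ, γ θ := by
    rw [hsplitf, hsplitg]; ring
  -- Step A : |∫_{ΘF} (γ - φ)| ≤ ∫_{ΘF} η
  have stepA : |(∫ θ in ΘF, γ θ) - ∫ θ in ΘF, φ θ| ≤ ∫ θ in ΘF, η θ := by
    rw [← integral_sub hgint.integrableOn hfint.integrableOn]
    calc |∫ θ in ΘF, (γ θ - φ θ)| ≤ ∫ θ in ΘF, |γ θ - φ θ| := by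
          simpa [Real.norm_eq_abs] using
            norm_integral_le_integral_norm (μ := volume.restrict ΘF) (fun θ => γ θ - φ θ)
      _ ≤ ∫ θ in ΘF, η θ := by
          refine setIntegral_mono_on
            ((hgint.integrableOn.sub hfint.integrableOn).abs) hη_int hΘFm ?_
          intro θ _
          rw [abs_sub_comm]
          have := key_ineq (hf0 θ) (hg0 θ) (hfle θ) (hgle θ)
          simpa [hφdef, hγdef, hηdef, hudef] using this
  -- Step B : ∫_{ΘF} η ≤ δ * log (λ(ΘF)/δ)
  have hLpos : 0 < (volume ΘF).toReal := ENNReal.toReal_pos hΘFpos.ne' hΘFfin.ne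
  have stepB : ∫ θ in ΘF, η θ ≤ δ * Real.log ((volume ΘF).toReal / δ) := by
    rcases eq_or_lt_of_le hδ0 with hδz | hδpos
    · -- δ = 0 : |f - g| vanishes a.e. on ΘF
      have h0 : u =ᶠ[ae (volume.restrict ΘF)] 0 := by
        rw [← integral_eq_zero_iff_of_nonneg (fun θ => hu0 θ) hu_int]
        rw [hδ] at hδz; exact hδz.symm
      have hη0 : η =ᶠ[ae (volume.restrict ΘF)] 0 := by
        filter_upwards [h0] with θ hθ
        simp only [hηdef, Pi.zero_apply] at hθ ⊢
        rw [hθ]; simp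
      rw [integral_congr_ae hη0, ← hδz]
      simp
    · set c : ℝ := (volume ΘF).toReal / δ with hcdef
      have hcpos : 0 < c := div_pos hLpos hδpos
      have hpt : ∀ θ ∈ ΘF, η θ ≤ 1/c + u θ * (Real.log c - 1) := fun θ _ =>
        eta_le_tangent (hu0 θ) hcpos
      have hrhs_int : IntegrableOn (fun θ => 1/c + u θ * (Real.log c - 1)) ΘF volume :=
        (hconst (1/c)).add (hu_int.mul_const _)
      have h1 : ∫ θ in ΘF, η θ ≤ ∫ θ in ΘF, (1/c + u θ * (Real.log c - 1)) :=
        setIntegral_mono_on hη_int hrhs_int hΘFm hpt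
      have h2 : ∫ θ in ΘF, (1/c + u θ * (Real.log c - 1))
          = (volume ΘF).toReal * (1/c) + δ * (Real.log c - 1) := by
        rw [integral_add (hconst (1/c)) (hu_int.mul_const _), setIntegral_const,
          integral_mul_const, ← hδ]
        rw [smul_eq_mul]
        rfl
      have h3 : (volume ΘF).toReal * (1/c) = δ := by
        rw [hcdef]; field_simp
      rw [h2, h3] at h1
      linarith [h1]
  calc |(-∫ θ, φ θ) - (-∫ θ, γ θ)|
      = |((∫ θ in ΘF, γ θ) - ∫ θ in ΘF, φ θ) + ∫ θ in ΘFᶜ, γ θ| := by rw [hrw]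
    _ ≤ |(∫ θ in ΘF, γ θ) - ∫ θ in ΘF, φ θ| + |∫ θ in ΘFᶜ, γ θ| := abs_add_le _ _
    _ ≤ (∫ θ in ΘF, η θ) + |∫ θ in ΘFᶜ, γ θ| := add_le_add stepA le_rfl
    _ ≤ δ * Real.log ((volume ΘF).toReal / δ) + |∫ θ in ΘFᶜ, γ θ| :=
        add_le_add stepB le_rfl
end
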